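/- Under common support, conditionally independent censoring, and correct specification of the outcome model (Ŝ = S) and censoring model, the scaled variance of the single-sample IPCW-DR term equals E_{p(x)π_0(a|x)}[w(x,a)² σ²(x,a,t)] + Var_{p(x)}[S^{π_e}(x,t)], where w(x,a)=π_e(a|x)/π_0(a|x), σ²(x,a,t)=S(x,a,t)/G(t|x,a) − S(x,a,t)², and S^{π_e}(x,t)=Σ_a π_e(a|x)S(x,a,t). -/

import Mathlib

open MeasureTheory Finset

lemma ipcw_aux {Ω : Type*} [MeasurableSpace Ω] (μ : Measure Ω) [IsProbabilityMeasure μ]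
    (L C : Ω → ℝ) (hL : Measurable L) (hC : Measurable C) (t : ℝ)
    (hInd : μ {ω | t < L ω ∧ t < C ω} = μ {ω | t < L ω} * μ {ω | t < C ω})
    (S G w Spe : ℝ) (hS : S = (μ {ω | t < L ω}).toReal)
    (hG : G = (μ {ω | t < C ω}).toReal) (hGpos : 0 < G) :
    (∫ ω, (w * (Set.indicator {ω : Ω | t < min (L ω) (C ω)} (fun _ => (1:ℝ)) ω / G - S) + Spe) ∂μ
      = Spe)
    ∧ (∫ ω, (w * (Set.indicator {ω : Ω | t < min (L ω) (C ω)} (fun _ => (1:ℝ)) ω / G - S) + Spe)^2 ∂μ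
        = w^2 * (S/G - S^2) + Spe^2) := by
  set s : Set Ω := {ω : Ω | t < min (L ω) (C ω)} with hsdef
  have hms : MeasurableSet s := measurableSet_lt measurable_const (hL.min hC)
  set I : Ω → ℝ := s.indicator (fun _ => (1:ℝ)) with hIdef
  have hIint : Integrable I μ := (integrable_const (1:ℝ)).indicator hms
  have hIsq : ∀ ω, I ω ^ 2 = I ω := by
    intro ω
    by_cases h : ω ∈ s <;> simp [hIdef, Set.indicator_apply, h]
  have hseq : s = {ω | t < L ω ∧ t < C ω} := by
    ext ω; simp [hsdef, lt_min_iff]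
  have hIint' : ∫ ω, I ω ∂μ = S * G := by
    rw [hIdef, integral_indicator_const (1:ℝ) hms, hseq, measureReal_def, hInd, smul_eq_mul, mul_one,
      ENNReal.toReal_mul, hS, hG]
  set c : ℝ := w / G with hc
  set d : ℝ := Spe - w * S with hd
  have hpt : ∀ ω, w * (I ω / G - S) + Spe = c * I ω + d := by
    intro ω; rw [hc, hd]; field_simp; ring
  have hpt2 : ∀ ω, (w * (I ω / G - S) + Spe)^2 = (c^2 + 2*c*d) * I ω + d^2 := by
    intro ω; rw [hpt ω]
    linear_combination c^2 * hIsq ω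
  have h1 : ∫ ω, (w * (I ω / G - S) + Spe) ∂μ = Spe := by
    calc ∫ ω, (w * (I ω / G - S) + Spe) ∂μ = ∫ ω, (c * I ω + d) ∂μ := by
          exact integral_congr_ae (Filter.Eventually.of_forall hpt)
      _ = c * (S * G) + d := by
          rw [integral_add (hIint.const_mul c) (integrable_const d),
            integral_const_mul, hIint', integral_const]
          simp
      _ = Spe := by rw [hc, hd]; field_simp; ring
  have h2 : ∫ ω, (w * (I ω / G - S) + Spe)^2 ∂μ = w^2 * (S/G - S^2) + Spe^2 := by
    calc ∫ ω, (w * (I ω / G - S) + Spe)^2 ∂μ = ∫ ω, ((c^2 + 2*c*d) * I ω + d^2) ∂μ := by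
          exact integral_congr_ae (Filter.Eventually.of_forall hpt2)
      _ = (c^2 + 2*c*d) * (S * G) + d^2 := by
          rw [integral_add (hIint.const_mul _) (integrable_const _),
            integral_const_mul, hIint', integral_const]
          simp
      _ = w^2 * (S/G - S^2) + Spe^2 := by rw [hc, hd]; field_simp; ring
  exact ⟨h1, h2⟩

/-- Variance of the single-sample IPCW-DR term with correctly specified
outcome and censoring models. -/
theorem ipcw_dr_variance
    {X A Ω : Type*} [Fintype X] [Fintype A] [MeasurableSpace Ω]
    (p : X → ℝ) (hp : ∀ x, 0 ≤ p x) (hp1 : ∑ x, p x = 1)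
    (π0 πe : X → A → ℝ)
    (hπ0 : ∀ x a, 0 ≤ π0 x a) (hπ0s : ∀ x, ∑ a, π0 x a = 1)
    (hπe : ∀ x a, 0 ≤ πe x a) (hπes : ∀ x, ∑ a, πe x a = 1)
    (hsupp : ∀ x a, 0 < πe x a → 0 < π0 x a)
    (μ : X → A → Measure Ω) [∀ x a, IsProbabilityMeasure (μ x a)]
    (L C : Ω → ℝ) (hL : Measurable L) (hC : Measurable C)
    (hInd : ∀ x a (s u : ℝ), μ x a {ω | s < L ω ∧ u < C ω} =
      μ x a {ω | s < L ω} * μ x a {ω | u < C ω})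
    (t : ℝ)
    (S G : X → A → ℝ)
    (hS : ∀ x a, S x a = (μ x a {ω | t < L ω}).toReal)
    (hGdef : ∀ x a, G x a = (μ x a {ω | t < C ω}).toReal)
    (hG : ∀ x a, 0 < G x a)
    (w : X → A → ℝ) (hw : ∀ x a, w x a = πe x a / π0 x a) :
    (∑ x, p x * ∑ a, π0 x a *
        ∫ ω, (w x a *
            (Set.indicator {ω : Ω | t < min (L ω) (C ω)} (fun _ => (1 : ℝ)) ω / G x a - S x a)
          + ∑ a', πe x a' * S x a') ^ 2 ∂(μ x a))
      - (∑ x, p x * ∑ a, π0 x a *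
          ∫ ω, (w x a *
              (Set.indicator {ω : Ω | t < min (L ω) (C ω)} (fun _ => (1 : ℝ)) ω / G x a - S x a)
            + ∑ a', πe x a' * S x a') ∂(μ x a)) ^ 2
    = (∑ x, p x * ∑ a, π0 x a * (w x a ^ 2 * (S x a / G x a - S x a ^ 2)))
      + ((∑ x, p x * (∑ a, πe x a * S x a) ^ 2) - (∑ x, p x * ∑ a, πe x a * S x a) ^ 2) := by
  have haux := fun (x : X) (a : A) =>
    ipcw_aux (μ x a) L C hL hC t (hInd x a t t) (S x a) (G x a) (w x a)
      (∑ a', πe x a' * S x a') (hS x a) (hGdef x a) (hG x a)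
  have key2 : ∀ x, ∑ a, π0 x a *
      ∫ ω, (w x a *
          (Set.indicator {ω : Ω | t < min (L ω) (C ω)} (fun _ => (1 : ℝ)) ω / G x a - S x a)
        + ∑ a', πe x a' * S x a') ^ 2 ∂(μ x a)
      = (∑ a, π0 x a * (w x a ^ 2 * (S x a / G x a - S x a ^ 2)))
        + (∑ a', πe x a' * S x a') ^ 2 := by
    intro x
    have h : ∀ a ∈ Finset.univ, π0 x a *
        ∫ ω, (w x a *
            (Set.indicator {ω : Ω | t < min (L ω) (C ω)} (fun _ => (1 : ℝ)) ω / G x a - S x a)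
          + ∑ a', πe x a' * S x a') ^ 2 ∂(μ x a)
        = π0 x a * (w x a ^ 2 * (S x a / G x a - S x a ^ 2))
          + π0 x a * (∑ a', πe x a' * S x a') ^ 2 := by
      intro a _
      rw [(haux x a).2, mul_add]
    rw [Finset.sum_congr rfl h, Finset.sum_add_distrib, ← Finset.sum_mul, hπ0s x, one_mul]
  have key1 : ∀ x, ∑ a, π0 x a *
      ∫ ω, (w x a *
          (Set.indicator {ω : Ω | t < min (L ω) (C ω)} (fun _ => (1 : ℝ)) ω / G x a - S x a)
        + ∑ a', πe x a' * S x a') ∂(μ x a)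
      = ∑ a', πe x a' * S x a' := by
    intro x
    have h : ∀ a ∈ Finset.univ, π0 x a *
        ∫ ω, (w x a *
            (Set.indicator {ω : Ω | t < min (L ω) (C ω)} (fun _ => (1 : ℝ)) ω / G x a - S x a)
          + ∑ a', πe x a' * S x a') ∂(μ x a)
        = π0 x a * (∑ a', πe x a' * S x a') := by
      intro a _
      rw [(haux x a).1]
    rw [Finset.sum_congr rfl h, ← Finset.sum_mul, hπ0s x, one_mul]
  simp only [key1, key2, mul_add, Finset.sum_add_distrib]
  ring
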